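/- arXiv:2306.10939 — 3 statements merged into one kernel-verified Lean document; each statement's English description precedes it below -/
import Mathlib

section
/- The number of weak compositions (c_1,...,c_n) of nonnegative integers satisfying c_{n+1-1}+c_{n+1-2}+...+c_{n+1-j} ≤ j-1 for all j = 1,...,n equals the n-th Catalan number (1/(n+1))·binomial(2n,n). -/
open Finset

/-- Generalized ABB set with slack `m`. -/
def abbT (n m : ℕ) : Set (ℕ → ℕ) :=
  {c | (∀ i, i ∉ Finset.Icc 1 n → c i = 0) ∧
    (∀ j ∈ Finset.Icc 1 n, (∑ i ∈ Finset.Icc (n + 1 - j) n, c i) + 1 ≤ j + m)}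

lemma abbT_bound {n m : ℕ} {c : ℕ → ℕ} (hc : c ∈ abbT n m) (i : ℕ) : c i ≤ n + m := by
  obtain ⟨h0, hs⟩ := hc
  by_cases hi : i ∈ Finset.Icc 1 n
  · have hn : n ∈ Finset.Icc 1 n := by
      simp only [Finset.mem_Icc] at hi ⊢; omega
    have := hs n hn
    have hsub : n + 1 - n = 1 := by omega
    rw [hsub] at this
    have hle : c i ≤ ∑ k ∈ Finset.Icc 1 n, c k :=
      Finset.single_le_sum (fun k _ => Nat.zero_le _) hi
    omega
  · rw [h0 i hi]; omega

lemma abbT_finite (n m : ℕ) : (abbT n m).Finite := by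
  classical
  rw [← Set.finite_coe_iff]
  let φ : abbT n m → (Finset.Icc 1 n → Fin (n + m + 1)) := fun c i =>
    ⟨min (c.1 i.1) (n + m), by omega⟩
  have hinj : Function.Injective φ := by
    intro c₁ c₂ h
    ext i
    by_cases hi : i ∈ Finset.Icc 1 n
    · have h' := congrFun h ⟨i, hi⟩
      simp only [φ, Fin.mk.injEq] at h'
      have b1 := abbT_bound c₁.2 i
      have b2 := abbT_bound c₂.2 i
      omega
    · rw [c₁.2.1 i hi, c₂.2.1 i hi]
  exact Finite.of_injective φ hinj

lemma abbT_zero (m : ℕ) : abbT 0 m = {fun _ => 0} := by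
  ext c
  constructor
  · rintro ⟨h0, -⟩
    funext i
    exact h0 i (by simp)
  · rintro rfl
    exact ⟨fun i _ => rfl, fun j hj => by simp at hj⟩

/-- Partition a finite set according to the value of a bounded ℕ-valued function. -/
lemma ncard_partition {α : Type*} (f : α → ℕ) :
    ∀ (m : ℕ) (S : Set α), S.Finite → (∀ a ∈ S, f a ≤ m) →
      S.ncard = ∑ t ∈ Finset.range (m + 1), {a ∈ S | f a = t}.ncard := by
  intro m
  induction m with
  | zero =>
    intro S hS hb
    rw [Finset.sum_range_one]
    congr 1
    ext a
    simp only [Set.mem_setOf_eq]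
    exact ⟨fun h => ⟨h, Nat.le_zero.mp (hb a h)⟩, fun h => h.1⟩
  | succ m ih =>
    intro S hS hb
    have hsplit : S = {a ∈ S | f a = m + 1} ∪ {a ∈ S | f a ≤ m} := by
      ext a
      simp only [Set.mem_union, Set.mem_setOf_eq]
      constructor
      · intro h
        have := hb a h
        rcases Nat.lt_or_ge (f a) (m + 1) with h' | h'
        · exact Or.inr ⟨h, by omega⟩
        · exact Or.inl ⟨h, by omega⟩
      · rintro (h | h) <;> exact h.1
    have hdisj : Disjoint {a ∈ S | f a = m + 1} {a ∈ S | f a ≤ m} := by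
      rw [Set.disjoint_left]
      rintro a ⟨-, h1⟩ ⟨-, h2⟩
      omega
    have hf1 : ({a ∈ S | f a = m + 1}).Finite := hS.subset (Set.sep_subset _ _)
    have hf2 : ({a ∈ S | f a ≤ m}).Finite := hS.subset (Set.sep_subset _ _)
    rw [hsplit, Set.ncard_union_eq hdisj hf1 hf2, Finset.sum_range_succ]
    have hrec := ih {a ∈ S | f a ≤ m} hf2 (fun a ha => ha.2)
    rw [hrec]
    have hcong : ∀ t ∈ Finset.range (m + 1),
        {a ∈ {a ∈ S | f a ≤ m} | f a = t}.ncard = {a ∈ S | f a = t}.ncard := by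
      intro t ht
      rw [Finset.mem_range] at ht
      congr 1
      ext a
      simp only [Set.mem_setOf_eq]
      constructor
      · rintro ⟨⟨h1, -⟩, h3⟩; exact ⟨h1, h3⟩
      · rintro ⟨h1, h2⟩; exact ⟨⟨h1, by omega⟩, h2⟩
    rw [Finset.sum_congr rfl hcong]
    have : {a ∈ ({a ∈ S | f a = m + 1} ∪ {a ∈ S | f a ≤ m} : Set α) | f a = m + 1}
        = {a ∈ S | f a = m + 1} := by
      ext a
      simp only [Set.mem_setOf_eq, Set.mem_union]
      constructor
      · rintro ⟨h, h2⟩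
        rcases h with h | h
        · exact ⟨h.1, h2⟩
        · omega
      · rintro ⟨h1, h2⟩
        exact ⟨Or.inl ⟨h1, h2⟩, h2⟩
    rw [← hsplit] at this ⊢
    rw [this]
    ring

lemma sum_Icc_top {a n : ℕ} (h : a ≤ n + 1) (c : ℕ → ℕ) :
    ∑ i ∈ Finset.Icc a (n + 1), c i = (∑ i ∈ Finset.Icc a n, c i) + c (n + 1) := by
  rw [← Finset.insert_Icc_right_eq_Icc_add_one h, Finset.sum_insert (by simp)]
  ring

lemma abbT_fiber (n t k : ℕ) :
    {c ∈ abbT (n + 1) (t + k) | c (n + 1) = t}.ncard = (abbT n (k + 1)).ncard := by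
  classical
  have himg : (fun c => Function.update c (n + 1) 0) ''
      {c ∈ abbT (n + 1) (t + k) | c (n + 1) = t} = abbT n (k + 1) := by
    ext c'
    constructor
    · rintro ⟨c, ⟨⟨h0, hs⟩, hct⟩, rfl⟩
      show Function.update c (n + 1) 0 ∈ abbT n (k + 1)
      constructor
      · intro i hi
        by_cases hin : i = n + 1
        · subst hin; simp [Function.update_self]
        · rw [Function.update_of_ne hin]
          apply h0
          simp only [Finset.mem_Icc] at hi ⊢
          omega
      · intro j hj
        rw [Finset.mem_Icc] at hj
        have hsum : ∑ i ∈ Finset.Icc (n + 1 - j) n, Function.update c (n + 1) 0 i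
            = ∑ i ∈ Finset.Icc (n + 1 - j) n, c i := by
          apply Finset.sum_congr rfl
          intro i hi
          rw [Finset.mem_Icc] at hi
          exact Function.update_of_ne (by omega) _ _
        rw [hsum]
        have hj1 : j + 1 ∈ Finset.Icc 1 (n + 1) := by rw [Finset.mem_Icc]; omega
        have hcond := hs (j + 1) hj1
        have he : n + 1 + 1 - (j + 1) = n + 1 - j := by omega
        rw [he, sum_Icc_top (by omega) c, hct] at hcond
        omega
    · rintro ⟨h0, hs⟩
      refine ⟨Function.update c' (n + 1) t, ⟨⟨?_, ?_⟩, ?_⟩, ?_⟩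
      · intro i hi
        have hin : i ≠ n + 1 := by
          intro h; subst h; simp at hi
        rw [Function.update_of_ne hin]
        apply h0
        simp only [Finset.mem_Icc] at hi ⊢
        omega
      · intro j hj
        rw [Finset.mem_Icc] at hj
        rcases Nat.eq_or_lt_of_le hj.1 with h1 | h1
        · -- j = 1
          have hjj : j = 1 := h1.symm
          subst hjj
          have he : n + 1 + 1 - 1 = n + 1 := by omega
          rw [he]
          rw [Finset.Icc_self, Finset.sum_singleton, Function.update_self]
          omega
        · -- j ≥ 2
          obtain ⟨j', rfl⟩ : ∃ j', j = j' + 1 := ⟨j - 1, by omega⟩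
          have he : n + 1 + 1 - (j' + 1) = n + 1 - j' := by omega
          rw [he, sum_Icc_top (by omega), Function.update_self]
          have hsum : ∑ i ∈ Finset.Icc (n + 1 - j') n, Function.update c' (n + 1) t i
              = ∑ i ∈ Finset.Icc (n + 1 - j') n, c' i := by
            apply Finset.sum_congr rfl
            intro i hi
            rw [Finset.mem_Icc] at hi
            exact Function.update_of_ne (by omega) _ _
          rw [hsum]
          have hcond := hs j' (by rw [Finset.mem_Icc]; omega)
          omega
      · exact Function.update_self _ _ _
      · show Function.update (Function.update c' (n + 1) t) (n + 1) 0 = c'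
        funext i
        by_cases hin : i = n + 1
        · subst hin
          rw [Function.update_self]
          have : c' (n + 1) = 0 := h0 (n + 1) (by simp)
          simp [Function.update_self, this]
        · simp [Function.update_of_ne hin]
  have hinj : Set.InjOn (fun c => Function.update c (n + 1) 0)
      {c ∈ abbT (n + 1) (t + k) | c (n + 1) = t} := by
    rintro c₁ ⟨-, h1⟩ c₂ ⟨-, h2⟩ h
    funext i
    by_cases hin : i = n + 1
    · subst hin; rw [h1, h2]
    · have := congrFun h i
      simpa [Function.update_of_ne hin] using this
  rw [← himg, Set.ncard_image_of_injOn hinj]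

lemma abbT_rec (n m : ℕ) :
    (abbT (n + 1) m).ncard = ∑ t ∈ Finset.range (m + 1), (abbT n (m - t + 1)).ncard := by
  have hb : ∀ c ∈ abbT (n + 1) m, c (n + 1) ≤ m := by
    rintro c ⟨-, hs⟩
    have h1 : (1 : ℕ) ∈ Finset.Icc 1 (n + 1) := by rw [Finset.mem_Icc]; omega
    have := hs 1 h1
    have he : n + 1 + 1 - 1 = n + 1 := by omega
    rw [he, Finset.Icc_self, Finset.sum_singleton] at this
    omega
  rw [ncard_partition (fun c => c (n + 1)) m _ (abbT_finite _ _) hb]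
  apply Finset.sum_congr rfl
  intro t ht
  rw [Finset.mem_range] at ht
  obtain ⟨k, rfl⟩ : ∃ k, m = t + k := ⟨m - t, by omega⟩
  have he : t + k - t = k := by omega
  rw [he]
  exact abbT_fiber n t k

lemma sumId (n : ℕ) : ∀ m : ℕ,
    ∑ r ∈ Finset.range (m + 1),
      (((2 * n + 1 + r).choose n : ℤ) - ((2 * n + 1 + r).choose (n + r + 2) : ℤ))
    = ((2 * (n + 1) + m).choose (n + 1) : ℤ) - ((2 * (n + 1) + m).choose (n + m + 2) : ℤ) := by
  intro m
  induction m with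
  | zero =>
    rw [Finset.sum_range_one]
    have e1 : 2 * (n + 1) + 0 = (2 * n + 1) + 1 := by ring
    rw [e1]
    have h1 : ((2 * n + 1) + 1).choose (n + 1) = (2 * n + 1).choose n + (2 * n + 1).choose (n + 1) :=
      Nat.choose_succ_succ _ _
    have h2 : ((2 * n + 1) + 1).choose (n + 0 + 2) = (2 * n + 1).choose (n + 1) + (2 * n + 1).choose (n + 2) := by
      have : n + 0 + 2 = (n + 1) + 1 := by ring
      rw [this]
      exact Nat.choose_succ_succ _ _
    rw [h1, h2]
    push_cast
    ring_nf
  | succ m ih =>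
    rw [Finset.sum_range_succ, ih]
    simp only [show 2 * (n + 1) + (m + 1) = (2 * (n + 1) + m) + 1 from by ring,
      show 2 * n + 1 + (m + 1) = 2 * (n + 1) + m from by ring,
      show n + (m + 1) + 2 = (n + m + 2) + 1 from by ring,
      Nat.choose_succ_succ]
    push_cast
    ring

lemma abbT_closed (n : ℕ) : ∀ m : ℕ,
    ((abbT n m).ncard : ℤ) = ((2 * n + m).choose n : ℤ) - ((2 * n + m).choose (n + m + 1) : ℤ) := by
  induction n with
  | zero =>
    intro m
    rw [abbT_zero, Set.ncard_singleton]
    have h1 : (2 * 0 + m).choose 0 = 1 := Nat.choose_zero_right _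
    have h2 : (2 * 0 + m).choose (0 + m + 1) = 0 := Nat.choose_eq_zero_of_lt (by omega)
    rw [h1, h2]
    norm_num
  | succ n ih =>
    intro m
    rw [abbT_rec, Nat.cast_sum]
    have hcong : ∀ t ∈ Finset.range (m + 1),
        ((abbT n (m - t + 1)).ncard : ℤ)
          = ((2 * n + 1 + (m - t)).choose n : ℤ) - ((2 * n + 1 + (m - t)).choose (n + (m - t) + 2) : ℤ) := by
      intro t ht
      rw [ih (m - t + 1)]
      have e1 : 2 * n + (m - t + 1) = 2 * n + 1 + (m - t) := by omega
      have e2 : n + (m - t + 1) + 1 = n + (m - t) + 2 := by omega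
      rw [e1, e2]
    rw [Finset.sum_congr rfl hcong]
    have hrefl : ∑ t ∈ Finset.range (m + 1),
        (((2 * n + 1 + (m - t)).choose n : ℤ) - ((2 * n + 1 + (m - t)).choose (n + (m - t) + 2) : ℤ))
        = ∑ r ∈ Finset.range (m + 1),
        (((2 * n + 1 + r).choose n : ℤ) - ((2 * n + 1 + r).choose (n + r + 2) : ℤ)) := by
      have := Finset.sum_range_reflect
        (fun r => (((2 * n + 1 + r).choose n : ℤ) - ((2 * n + 1 + r).choose (n + r + 2) : ℤ))) (m + 1)
      rw [← this]
      apply Finset.sum_congr rfl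
      intro t ht
      rw [Finset.mem_range] at ht
      have : m + 1 - 1 - t = m - t := by omega
      rw [this]
    rw [hrefl, sumId n m, show n + 1 + m + 1 = n + m + 2 from by omega]

/-- The number of ABB compositions of length `n` (weak compositions
`(c_1,…,c_n)` with `c_n + c_{n-1} + ⋯ + c_{n+1-j} ≤ j-1` for all `j = 1,…,n`)
equals the `n`-th Catalan number. We encode a weak composition of length `n`
as a function `c : ℕ → ℕ` vanishing outside `{1,…,n}`. -/
theorem abb_card_eq_catalan (n : ℕ) :
    {c : ℕ → ℕ |
        (∀ i, i ∉ Finset.Icc 1 n → c i = 0) ∧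
        (∀ j ∈ Finset.Icc 1 n, (∑ i ∈ Finset.Icc (n + 1 - j) n, c i) + 1 ≤ j)}.ncard
      = catalan n := by
  have hset : {c : ℕ → ℕ |
        (∀ i, i ∉ Finset.Icc 1 n → c i = 0) ∧
        (∀ j ∈ Finset.Icc 1 n, (∑ i ∈ Finset.Icc (n + 1 - j) n, c i) + 1 ≤ j)} = abbT n 0 := by
    ext c
    simp only [abbT, Set.mem_setOf_eq, Nat.add_zero]
  rw [hset]
  have hclosed := abbT_closed n 0
  have e1 : 2 * n + 0 = 2 * n := by ring
  have e2 : n + 0 + 1 = n + 1 := by ring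
  rw [e1, e2] at hclosed
  -- (n+1) * catalan n = (2n choose n)
  have hcat : (n + 1) * catalan n = (2 * n).choose n := succ_mul_catalan_eq_centralBinom n
  have hratio : (2 * n).choose (n + 1) * (n + 1) = (2 * n).choose n * n := by
    have := Nat.choose_succ_right_eq (2 * n) n
    rwa [show 2 * n - n = n by omega] at this
  have key : ((n : ℤ) + 1) * ((abbT n 0).ncard : ℤ) = ((n : ℤ) + 1) * (catalan n : ℤ) := by
    rw [hclosed]
    have h1 : ((2 * n).choose (n + 1) : ℤ) * ((n : ℤ) + 1) = ((2 * n).choose n : ℤ) * (n : ℤ) := by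
      exact_mod_cast hratio
    have h2 : ((n : ℤ) + 1) * (catalan n : ℤ) = ((2 * n).choose n : ℤ) := by
      exact_mod_cast hcat
    linear_combination -h1 - h2
  have hne : ((n : ℤ) + 1) ≠ 0 := by positivity
  have := mul_left_cancel₀ hne key
  exact_mod_cast this
end

section
/- The number of weak compositions (c_1,...,c_n) of nonnegative integers with total sum n-1 satisfying c_n + c_{n-1} + ... + c_{n+1-j} ≤ j-1 for all j = 1,...,n equals the (n-1)-st Catalan number. -/
open List DyckStep

namespace AbbTop

/-- Encode a list of naturals as a step list: each entry `a` becomes `U` followed by `a` `D`s. -/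
def toSteps : List ℕ → List DyckStep
  | [] => []
  | a :: t => U :: (List.replicate a D ++ toSteps t)

@[simp] lemma toSteps_nil : toSteps [] = [] := rfl

@[simp] lemma toSteps_cons (a : ℕ) (t : List ℕ) :
    toSteps (a :: t) = U :: (List.replicate a D ++ toSteps t) := rfl

lemma toSteps_append (l₁ l₂ : List ℕ) :
    toSteps (l₁ ++ l₂) = toSteps l₁ ++ toSteps l₂ := by
  induction l₁ with
  | nil => simp
  | cons a t ih => simp [ih]

@[simp] lemma toSteps_count_U (l : List ℕ) : (toSteps l).count U = l.length := by
  induction l with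
  | nil => simp
  | cons a t ih => simp [ih, List.count_cons, List.count_replicate]

@[simp] lemma toSteps_count_D (l : List ℕ) : (toSteps l).count D = l.sum := by
  induction l with
  | nil => simp
  | cons a t ih => simp [ih, List.count_cons, List.count_replicate]

lemma toSteps_head (l : List ℕ) : (toSteps l).head? ≠ some D := by
  cases l <;> simp

lemma toSteps_prefix (l : List ℕ) (c : ℕ) (h : ∀ k, (l.take k).sum ≤ k + c) (i : ℕ) :
    ((toSteps l).take i).count D ≤ ((toSteps l).take i).count U + c := by
  induction l generalizing c i with
  | nil => simp
  | cons a t ih =>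
    have ha : a ≤ 1 + c := by simpa using h 1
    match i with
    | 0 => simp
    | j + 1 =>
      rw [toSteps_cons, List.take_succ_cons, List.take_append]
      have ht : ∀ k, (t.take k).sum ≤ k + (c + 1 - a) := by
        intro k
        have := h (k + 1)
        simp only [List.take_succ_cons, List.sum_cons] at this
        omega
      have := ih (c + 1 - a) ht (j - (List.replicate a D).length)
      simp only [List.count_cons, List.count_append, List.take_replicate,
        List.count_replicate, List.length_replicate, beq_iff_eq, reduceCtorEq, if_true, if_false] at *
      omega

lemma replicate_eq_aux : ∀ (a : ℕ), ∀ (b : ℕ) (X Y : List DyckStep),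
    X.head? ≠ some D → Y.head? ≠ some D →
    List.replicate a D ++ X = List.replicate b D ++ Y → a = b ∧ X = Y := by
  intro a
  induction a with
  | zero =>
    intro b X Y hX hY h
    cases b with
    | zero => simpa using h
    | succ b => simp only [List.replicate_succ, List.replicate_zero, List.nil_append, List.cons_append] at h
                subst h; simp at hX
  | succ a ih =>
    intro b X Y hX hY h
    cases b with
    | zero =>
      simp only [List.replicate_succ, List.replicate_zero, List.nil_append, List.cons_append] at h
      rw [← h] at hY; simp at hY
    | succ b =>
      simp only [List.replicate_succ, List.cons_append, List.cons.injEq, true_and] at h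
      obtain ⟨h1, h2⟩ := ih b X Y hX hY h
      exact ⟨by omega, h2⟩

lemma toSteps_injective : Function.Injective toSteps := by
  intro l₁
  induction l₁ with
  | nil =>
    intro l₂ h
    cases l₂ with
    | nil => rfl
    | cons b t => simp at h
  | cons a t ih =>
    intro l₂ h
    cases l₂ with
    | nil => simp at h
    | cons b t' =>
      simp only [toSteps_cons, List.cons.injEq, true_and] at h
      obtain ⟨h1, h2⟩ := replicate_eq_aux a b _ _ (toSteps_head t) (toSteps_head t') h
      rw [h1, ih (h2)]

lemma exists_toSteps (N : ℕ) : ∀ w : List DyckStep, w.length ≤ N → w.head? ≠ some D →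
    ∃ l, toSteps l = w := by
  induction N with
  | zero =>
    intro w hw _
    rw [List.length_eq_zero_iff.mp (Nat.le_zero.mp hw)]
    exact ⟨[], rfl⟩
  | succ N ih =>
    intro w hw hh
    match w with
    | [] => exact ⟨[], rfl⟩
    | s :: v =>
      have hs : s = U := by
        rcases s.dichotomy with h | h
        · exact h
        · simp [h] at hh
      subst hs
      set p : DyckStep → Bool := fun x => decide (x = D) with hp
      have hv : List.replicate (v.takeWhile p).length D ++ v.dropWhile p = v := by
        nth_rw 3 [← List.takeWhile_append_dropWhile (p := p) (l := v)]
        congr 1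
        symm
        rw [List.eq_replicate_iff]
        refine ⟨rfl, fun b hb => ?_⟩
        have := List.mem_takeWhile_imp hb
        simpa [hp] using this
      have hd : (v.dropWhile p).head? ≠ some D := by
        have := List.head?_dropWhile_not p v
        intro hcon
        rw [hcon] at this
        simp [hp] at this
      obtain ⟨t, ht⟩ := ih (v.dropWhile p) (by
        have h1 : (v.dropWhile p).length ≤ v.length := (List.dropWhile_sublist p).length_le
        simp only [List.length_cons] at hw; omega) hd
      exact ⟨(v.takeWhile p).length :: t, by rw [toSteps_cons, ht, hv]⟩



def elist (m : ℕ) (c : ℕ → ℕ) : List ℕ := (List.range m).map (fun j => c (m - j))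

@[simp] lemma elist_length (m c) : (elist m c).length = m := by simp [elist]

lemma list_sum_range (f : ℕ → ℕ) (k : ℕ) :
    ((List.range k).map f).sum = ∑ j ∈ Finset.range k, f j := by
  induction k with
  | zero => simp
  | succ k ih => rw [List.range_succ, Finset.sum_range_succ]; simp [ih]

lemma sum_reindex (c : ℕ → ℕ) (m k : ℕ) (hk : k ≤ m) :
    ∑ j ∈ Finset.range k, c (m - j) = ∑ i ∈ Finset.Icc (m + 1 - k) m, c i := by
  refine Finset.sum_nbij' (fun j => m - j) (fun i => m - i) ?_ ?_ ?_ ?_ ?_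
  · intro j hj; simp only [Finset.mem_range] at hj; simp only [Finset.mem_Icc]; omega
  · intro i hi; simp only [Finset.mem_Icc] at hi; simp only [Finset.mem_range]; omega
  · intro j hj; simp only [Finset.mem_range] at hj; omega
  · intro i hi; simp only [Finset.mem_Icc] at hi; omega
  · intro j hj; rfl

lemma elist_take_sum (c : ℕ → ℕ) (m k : ℕ) (hk : k ≤ m) :
    ((elist m c).take k).sum = ∑ i ∈ Finset.Icc (m + 1 - k) m, c i := by
  rw [elist, ← List.map_take, List.take_range, min_eq_left hk, list_sum_range,
    sum_reindex c m k hk]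

lemma elist_sum (c : ℕ → ℕ) (m : ℕ) :
    (elist m c).sum = ∑ i ∈ Finset.Icc 1 m, c i := by
  have := elist_take_sum c m m le_rfl
  rw [List.take_of_length_le (by simp)] at this
  simpa using this



variable (m : ℕ)

def Sset (m : ℕ) : Set (ℕ → ℕ) :=
  {c : ℕ → ℕ |
      (∀ i, i ∉ Finset.Icc 1 (m + 1) → c i = 0) ∧
      (∑ i ∈ Finset.Icc 1 (m + 1), c i) = m ∧
      (∀ j ∈ Finset.Icc 1 (m + 1),
        (∑ i ∈ Finset.Icc (m + 1 + 1 - j) (m + 1), c i) + 1 ≤ j)}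

lemma mem_facts {m : ℕ} {c : ℕ → ℕ} (hc : c ∈ Sset m) :
    c (m + 1) = 0 ∧ (∑ i ∈ Finset.Icc 1 m, c i) = m ∧
      ∀ k ≤ m, (∑ i ∈ Finset.Icc (m + 1 - k) m, c i) ≤ k := by
  obtain ⟨h0, hsum, hle⟩ := hc
  have htop : c (m + 1) = 0 := by
    have := hle 1 (by simp)
    simp only [Nat.add_sub_cancel] at this
    rw [Finset.Icc_self, Finset.sum_singleton] at this
    omega
  have hsum' : (∑ i ∈ Finset.Icc 1 m, c i) = m := by
    rw [Finset.sum_Icc_succ_top (by omega : 1 ≤ m + 1), htop] at hsum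
    omega
  refine ⟨htop, hsum', fun k hk => ?_⟩
  have := hle (k + 1) (by simp; omega)
  rw [show m + 1 + 1 - (k + 1) = m + 1 - k by omega,
    Finset.sum_Icc_succ_top (by omega : m + 1 - k ≤ m + 1), htop] at this
  omega

lemma elist_prefix {m : ℕ} {c : ℕ → ℕ} (hc : c ∈ Sset m) (k : ℕ) :
    ((elist m c).take k).sum ≤ k := by
  obtain ⟨htop, hsum, hle⟩ := mem_facts hc
  rcases le_or_gt k m with h | h
  · rw [elist_take_sum c m k h]
    exact hle k h
  · rw [List.take_of_length_le (by rw [elist_length]; omega), elist_sum, hsum]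
    omega

/-- The Dyck word associated to an element of `Sset m`. -/
def dyckOf {m : ℕ} (c : {x // x ∈ Sset m}) : {p : DyckWord // p.semilength = m} := by
  refine ⟨⟨toSteps (elist m c.1), ?_, ?_⟩, ?_⟩
  · rw [toSteps_count_U, toSteps_count_D, elist_length, elist_sum,
      (mem_facts c.2).2.1]
  · intro i
    simpa using toSteps_prefix (elist m c.1) 0 (by simpa using elist_prefix c.2) i
  · show (toSteps (elist m c.1)).count U = m
    rw [toSteps_count_U, elist_length]

lemma dyckOf_bijective (m : ℕ) : Function.Bijective (dyckOf (m := m)) := by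
  constructor
  · rintro ⟨c₁, hc₁⟩ ⟨c₂, hc₂⟩ h
    have hl : elist m c₁ = elist m c₂ := by
      apply toSteps_injective
      exact congrArg (fun x => x.1.toList) h
    have he : ∀ j < m, c₁ (m - j) = c₂ (m - j) := by
      intro j hj
      have := congrArg (fun l => l.getD j 0) hl
      simpa [elist, List.getD_eq_getElem?_getD, hj] using this
    apply Subtype.ext
    funext i
    show c₁ i = c₂ i
    by_cases hi : i ∈ Finset.Icc 1 (m + 1)
    · simp only [Finset.mem_Icc] at hi
      rcases eq_or_lt_of_le hi.2 with rfl | hlt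
      · rw [(mem_facts hc₁).1, (mem_facts hc₂).1]
      · have hip : i ≤ m := by omega
        have := he (m - i) (by omega)
        rwa [show m - (m - i) = i by omega] at this
    · rw [hc₁.1 i hi, hc₂.1 i hi]
  · rintro ⟨p, hp⟩
    have hhead : p.toList.head? ≠ some D := by
      intro hcon
      have hne : p.toList ≠ [] := by intro h; rw [h] at hcon; simp at hcon
      have := p.head_eq_U hne
      rw [List.head?_eq_head hne, this] at hcon
      simp at hcon
    obtain ⟨l, hl⟩ := exists_toSteps p.toList.length p.toList le_rfl hhead
    have hlen : l.length = m := by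
      have h2 := toSteps_count_U l; rw [hl] at h2; rw [← h2]; exact hp
    have hsum : l.sum = m := by
      have h2 := toSteps_count_D l; rw [hl] at h2
      rw [← h2, ← p.count_U_eq_count_D]; exact hp
    have hpre : ∀ k, (l.take k).sum ≤ k := by
      intro k
      have hsplit : toSteps (l.take k) ++ toSteps (l.drop k) = p.toList := by
        rw [← toSteps_append, List.take_append_drop, hl]
      have htake : p.toList.take (toSteps (l.take k)).length = toSteps (l.take k) := by
        rw [← hsplit, List.take_left]
      have := p.count_D_le_count_U (toSteps (l.take k)).length
      rw [htake, toSteps_count_D, toSteps_count_U] at this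
      calc (l.take k).sum ≤ (l.take k).length := this
        _ ≤ k := by simp
    -- construct the preimage
    set c : ℕ → ℕ := fun i => if 1 ≤ i ∧ i ≤ m then l.getD (m - i) 0 else 0 with hcdef
    have helist : elist m c = l := by
      apply List.ext_getElem (by simp [elist_length, hlen])
      intro j h1 h2
      have hj : j < m := by simpa [elist_length] using h1
      simp only [elist, List.getElem_map, List.getElem_range, hcdef]
      rw [if_pos (by omega), show m - (m - j) = j by omega,
        List.getD_eq_getElem?_getD, List.getElem?_eq_getElem (by omega), Option.getD_some]
    have hcS : c ∈ Sset m := by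
      refine ⟨fun i hi => ?_, ?_, fun j hj => ?_⟩
      · simp only [Finset.mem_Icc, not_and_or, not_le] at hi
        rw [hcdef]; simp only []
        rw [if_neg (by omega)]
      · have h1 : c (m + 1) = 0 := by rw [hcdef]; simp only []; rw [if_neg (by omega)]
        rw [Finset.sum_Icc_succ_top (by omega : 1 ≤ m + 1), h1, add_zero]
        have := elist_sum c m
        rw [helist, hsum] at this
        omega
      · simp only [Finset.mem_Icc] at hj
        obtain ⟨hj1, hj2⟩ := hj
        obtain ⟨k, rfl⟩ : ∃ k, j = k + 1 := ⟨j - 1, by omega⟩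
        have hk : k ≤ m := by omega
        have h1 : c (m + 1) = 0 := by rw [hcdef]; simp only []; rw [if_neg (by omega)]
        rw [show m + 1 + 1 - (k + 1) = m + 1 - k by omega,
          Finset.sum_Icc_succ_top (by omega : m + 1 - k ≤ m + 1), h1, add_zero]
        have := elist_take_sum c m k hk
        rw [helist] at this
        have := hpre k
        omega
    refine ⟨⟨c, hcS⟩, ?_⟩
    apply Subtype.ext
    apply DyckWord.ext
    show toSteps (elist m c) = p.toList
    rw [helist, hl]


end AbbTop

/-- The number of weak compositions `(c_1,…,c_n)` of total sum `n-1`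
satisfying `c_n + c_{n-1} + ⋯ + c_{n+1-j} ≤ j-1` for all `j = 1,…,n` equals the
`(n-1)`-st Catalan number. -/
theorem abb_top_card_eq_catalan (n : ℕ) (hn : 1 ≤ n) :
    {c : ℕ → ℕ |
        (∀ i, i ∉ Finset.Icc 1 n → c i = 0) ∧
        (∑ i ∈ Finset.Icc 1 n, c i) = n - 1 ∧
        (∀ j ∈ Finset.Icc 1 n, (∑ i ∈ Finset.Icc (n + 1 - j) n, c i) + 1 ≤ j)}.ncard
      = catalan (n - 1) := by
  obtain ⟨m, rfl⟩ : ∃ m, n = m + 1 := ⟨n - 1, by omega⟩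
  have hset : {c : ℕ → ℕ |
        (∀ i, i ∉ Finset.Icc 1 (m + 1) → c i = 0) ∧
        (∑ i ∈ Finset.Icc 1 (m + 1), c i) = m + 1 - 1 ∧
        (∀ j ∈ Finset.Icc 1 (m + 1),
          (∑ i ∈ Finset.Icc (m + 1 + 1 - j) (m + 1), c i) + 1 ≤ j)} = AbbTop.Sset m := by
    simp only [AbbTop.Sset, Nat.add_sub_cancel]
  rw [hset, Nat.add_sub_cancel, ← Nat.card_coe_set_eq,
    Nat.card_eq_of_bijective _ (AbbTop.dyckOf_bijective m),
    Nat.card_eq_fintype_card, DyckWord.card_dyckWord_semilength_eq_catalan]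
end

section
/- Every finitely supported sequence of nonnegative integers indexed by the positive integers can be written uniquely as a concatenation of blocks, where each block of length i is a maximal-weight ABB composition of length i (i.e., a weak composition (c_1,...,c_i) with sum i-1 satisfying the partial-sum conditions c_i + ... + c_{i+1-j} ≤ j-1 for all j ≤ i). -/
/-- A maximal-weight ABB composition: a nonempty list `l = (c_1,…,c_i)` of
nonnegative integers of total sum `i - 1` such that for every `1 ≤ j ≤ i` the
sum of the last `j` entries is at most `j - 1`. -/
def IsABBtop (l : List ℕ) : Prop :=
  l ≠ [] ∧ l.sum + 1 = l.length ∧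
    ∀ j, 1 ≤ j → j ≤ l.length → (l.drop (l.length - j)).sum + 1 ≤ j

/-- Partial sums of the sequence `c 1, c 2, …`. -/
def ABBS (c : ℕ → ℕ) (m : ℕ) : ℕ := ((List.range m).map fun i => c (i + 1)).sum

lemma ABBS_add (c : ℕ → ℕ) (p d : ℕ) :
    ABBS c (p + d) = ABBS c p + ((List.range d).map fun i => c (p + i + 1)).sum := by
  unfold ABBS
  rw [List.range_add, List.map_append, List.sum_append, List.map_map]
  rfl

lemma ABBS_mono (c : ℕ → ℕ) {p m : ℕ} (h : p ≤ m) : ABBS c p ≤ ABBS c m := by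
  obtain ⟨d, rfl⟩ := Nat.le.dest h
  rw [ABBS_add]; omega

lemma ABB_take_map_range (g : ℕ → ℕ) {a d : ℕ} (h : a ≤ d) :
    ((List.range d).map g).take a = (List.range a).map g := by
  rw [← List.map_take, List.take_range, min_eq_left h]

/-- Every finitely supported sequence `c : ℕ → ℕ` (indexed by the
positive integers, i.e. the value of the vector at position `i ≥ 1` is `c i`)
can be written uniquely as the concatenation of a sequence of blocks
`B 0, B 1, B 2, …`, each of which is a maximal-weight ABB composition;
concatenation is expressed by saying that for every `n`, the join of the first
`n` blocks is the corresponding initial segment of the sequence `(c 1, c 2, …)`. -/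
theorem abb_block_decomposition (c : ℕ → ℕ) (hfin : ∃ N, ∀ i, N ≤ i → c i = 0) :
    ∃! B : ℕ → List ℕ,
      (∀ k, IsABBtop (B k)) ∧
      ∀ n, ((List.range n).map B).flatten
          = (List.range (((List.range n).map B).flatten.length)).map (fun i => c (i + 1)) := by
  classical
  obtain ⟨N, hN⟩ := hfin
  -- partial sums stabilize
  have hstab : ∀ d, ABBS c (N + d) = ABBS c N := by
    intro d
    rw [ABBS_add]
    have h0 : ((List.range d).map fun i => c (N + i + 1)).sum = 0 := by
      apply List.sum_eq_zero
      intro x hx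
      simp only [List.mem_map, List.mem_range] at hx
      obtain ⟨i, -, rfl⟩ := hx
      exact hN _ (by omega)
    omega
  have hex : ∀ k, ∃ m, k + ABBS c m ≤ m := by
    intro k
    refine ⟨N + (ABBS c N + k), ?_⟩
    rw [hstab]; omega
  set q : ℕ → ℕ := fun k => Nat.find (hex k) with hq_def
  have hqP : ∀ k, k + ABBS c (q k) ≤ q k := fun k => Nat.find_spec (hex k)
  have hqmin : ∀ k m, m < q k → m < k + ABBS c m := by
    intro k m hm
    have := Nat.find_min (hex k) hm
    omega
  have hqeq : ∀ k, q k = k + ABBS c (q k) := by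
    intro k
    have h1 := hqP k
    rcases Nat.eq_zero_or_pos (q k) with h | h
    · omega
    · have h2 := hqmin k (q k - 1) (by omega)
      have h3 : ABBS c (q k - 1) ≤ ABBS c (q k) := ABBS_mono c (by omega)
      omega
  have hq0 : q 0 = 0 := by
    have h : (0 : ℕ) + ABBS c 0 ≤ 0 := by simp [ABBS]
    have h2 : q 0 ≤ 0 := Nat.find_min' (hex 0) h
    omega
  have hqlt : ∀ k, q k < q (k + 1) := by
    intro k
    have h1 : q k ≤ q (k + 1) := Nat.find_min' (hex k) (by have := hqP (k + 1); omega)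
    have h2 := hqeq k
    have h3 := hqeq (k + 1)
    rcases h1.lt_or_eq with h | h
    · exact h
    · rw [h] at h2; omega
  set B : ℕ → List ℕ :=
    fun k => (List.range (q (k + 1) - q k)).map (fun i => c (q k + i + 1)) with hB_def
  have hBlen : ∀ k, (B k).length = q (k + 1) - q k := by
    intro k; simp [hB_def]
  -- the fundamental sum identity for a block
  have hBsumfull : ∀ k, ABBS c (q (k + 1)) = ABBS c (q k) + (B k).sum := by
    intro k
    have h2 : q k + (q (k + 1) - q k) = q (k + 1) := by have := hqlt k; omega
    have h1 := ABBS_add c (q k) (q (k + 1) - q k)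
    rw [h2] at h1
    exact h1
  have hBsum : ∀ k, (B k).sum + 1 = (B k).length := by
    intro k
    have h1 := hBsumfull k
    have h3 := hqeq k
    have h4 := hqeq (k + 1)
    have h5 := hqlt k
    have h6 := hBlen k
    omega
  have hABB : ∀ k, IsABBtop (B k) := by
    intro k
    refine ⟨?_, hBsum k, ?_⟩
    · have h5 := hqlt k
      have h6 := hBlen k
      intro h
      rw [h] at h6
      simp at h6
      omega
    · intro j hj1 hj2
      have h6 := hBlen k
      have h5 := hqlt k
      rw [h6] at hj2
      set len := q (k + 1) - q k with hlen
      -- take part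
      have htake : ((B k).take (len - j)).sum + ABBS c (q k) = ABBS c (q k + (len - j)) := by
        have := ABBS_add c (q k) (len - j)
        rw [hB_def]
        rw [ABB_take_map_range _ (by omega)]
        omega
      have hsplit := List.sum_take_add_sum_drop (B k) (len - j)
      have hdroplen : (B k).length - j = len - j := by omega
      rw [hdroplen] at *
      have hm : q k + (len - j) = q (k + 1) - j := by omega
      have hmin := hqmin (k + 1) (q (k + 1) - j) (by omega)
      have hmono : ABBS c (q k + (len - j)) = ABBS c (q (k + 1) - j) := by rw [hm]
      have hfull := hBsumfull k
      have hsum := hBsum k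
      have h4 := hqeq (k + 1)
      have h3 := hqeq k
      omega
  -- the flatten identity
  have hflat : ∀ n, ((List.range n).map B).flatten
      = (List.range (q n)).map (fun i => c (i + 1)) := by
    intro n
    induction n with
    | zero => simp [hq0]
    | succ n ih =>
      rw [List.range_succ, List.map_append, List.flatten_append, ih]
      have h2 : q n + (q (n + 1) - q n) = q (n + 1) := by have := hqlt n; omega
      rw [← h2, List.range_add, List.map_append, List.map_map]
      simp [hB_def]
  have hflatlen : ∀ n, ((List.range n).map B).flatten.length = q n := by
    intro n; rw [hflat]; simp
  refine ⟨B, ⟨hABB, ?_⟩, ?_⟩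
  · intro n
    rw [hflatlen, hflat]
  · -- uniqueness
    rintro B' ⟨h1, h2⟩
    -- extraction of a block from the flatten identity
    have hext : ∀ n, ((List.range n).map B').flatten.length = q n →
        B' n = (List.range ((B' n).length)).map (fun i => c (q n + i + 1)) := by
      intro n hn
      have hL : ((List.range (n + 1)).map B').flatten
          = ((List.range n).map B').flatten ++ B' n := by
        rw [List.range_succ]; simp
      have h2' := h2 (n + 1)
      rw [hL] at h2'
      have hlen : (((List.range n).map B').flatten ++ B' n).length
          = q n + (B' n).length := by
        simp [hn]
      rw [hlen] at h2'
      have hLn : ((List.range n).map B').flatten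
          = (List.range (q n)).map (fun i => c (i + 1)) := by
        have h2n := h2 n
        rw [hn] at h2n
        exact h2n
      rw [hLn, List.range_add, List.map_append, List.map_map] at h2'
      have hc := List.append_cancel_left h2'
      simpa [Function.comp_def] using hc
    -- lengths of partial flattens of B' agree with q
    have hq' : ∀ n, ((List.range n).map B').flatten.length = q n := by
      intro n
      induction n with
      | zero => simp [hq0]
      | succ n ih =>
        have hB' := hext n ih
        have hL : ((List.range (n + 1)).map B').flatten
            = ((List.range n).map B').flatten ++ B' n := by
          rw [List.range_succ]; simp
        rw [hL, List.length_append, ih]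
        set len' := (B' n).length with hlen'
        obtain ⟨hne, hsum', hsuf⟩ := h1 n
        have hlenpos : 1 ≤ len' := List.length_pos_iff.mpr hne
        -- the sum of B' n as a segment sum
        have hfull : ABBS c (q n + len') = ABBS c (q n) + (B' n).sum := by
          have := ABBS_add c (q n) len'
          rw [← hB'] at this
          exact this
        have h3 := hqeq n
        -- e := q n + len' satisfies the defining predicate at n+1
        have hPe : (n + 1) + ABBS c (q n + len') ≤ q n + len' := by omega
        have hle : q (n + 1) ≤ q n + len' := Nat.find_min' (hex (n + 1)) hPe
        -- and nothing smaller does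
        have hge : q n + len' ≤ q (n + 1) := by
          by_contra hcon
          push_neg at hcon
          have hPq := hqP (n + 1)
          -- q (n+1) < q n + len'; derive contradiction
          rcases le_or_gt (q (n + 1)) (q n) with hcase | hcase
          · rcases hcase.lt_or_eq with hlt | heq
            · have := hqmin n _ hlt
              have := ABBS_mono c (le_of_lt hlt)
              omega
            · rw [heq] at hPq; omega
          · -- q n < q (n+1) < q n + len'
            set m := q (n + 1) with hm
            set j := q n + len' - m with hj
            have hj1 : 1 ≤ j := by omega
            have hj2 : j ≤ len' := by omega
            have hsufj := hsuf j hj1 (by omega)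
            have htake : ((B' n).take (len' - j)).sum + ABBS c (q n)
                = ABBS c (q n + (len' - j)) := by
              have := ABBS_add c (q n) (len' - j)
              rw [hB', ABB_take_map_range _ (by omega)]
              omega
            have hsplit := List.sum_take_add_sum_drop (B' n) (len' - j)
            have hmm : q n + (len' - j) = m := by omega
            rw [hmm] at htake
            rw [← hlen'] at hsufj
            omega
        omega
    -- now identify B' with B
    funext k
    have hB'k := hext k (hq' k)
    have hlenk : (B' k).length = q (k + 1) - q k := by
      have hL : ((List.range (k + 1)).map B').flatten
          = ((List.range k).map B').flatten ++ B' k := by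
        rw [List.range_succ]; simp
      have h5 := hq' (k + 1)
      rw [hL, List.length_append, hq' k] at h5
      have := hqlt k
      omega
    rw [hB'k, hlenk, hB_def]
end
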